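/- Let r ∈ (0,1) and let y ≥ 0, k ≥ y be integers. Then (2y+1)^r · (k − y) ≤ ∑_{i=1}^k i^r. -/

import Mathlib

open Finset

lemma real_rpow_add_le_add_rpow {p a b : ℝ} (ha : 0 ≤ a) (hb : 0 ≤ b)
    (hp : 0 ≤ p) (hp1 : p ≤ 1) : (a + b) ^ p ≤ a ^ p + b ^ p := by
  lift a to NNReal using ha
  lift b to NNReal using hb
  have := NNReal.rpow_add_le_add_rpow a b hp hp1
  exact_mod_cast this

theorem stmt_10 (r : ℝ) (hr0 : 0 < r) (hr1 : r < 1) (y k : ℕ) (hyk : y ≤ k) :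
    (2 * (y : ℝ) + 1) ^ r * ((k : ℝ) - (y : ℝ)) ≤ ∑ i ∈ Finset.Icc 1 k, (i : ℝ) ^ r := by
  have hrpos : (0:ℝ) ≤ r := hr0.le
  -- key per-index inequality
  have key : ∀ j ∈ Icc 1 (k - y),
      (2 * (y : ℝ) + 1) ^ r ≤ ((y + j : ℕ) : ℝ) ^ r + ((y + 1 - j : ℕ) : ℝ) ^ r := by
    intro j hj
    have hj1 : 1 ≤ j := (mem_Icc.mp hj).1
    have hsum : 2 * y + 1 ≤ (y + j) + (y + 1 - j) := by omega
    have h1 : (2 * (y : ℝ) + 1) ^ r ≤ (((y + j) + (y + 1 - j) : ℕ) : ℝ) ^ r := by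
      apply Real.rpow_le_rpow (by positivity) _ hrpos
      have : ((2 * y + 1 : ℕ) : ℝ) ≤ (((y + j) + (y + 1 - j) : ℕ) : ℝ) := by
        exact_mod_cast hsum
      push_cast at this ⊢
      linarith
    refine h1.trans ?_
    push_cast
    exact real_rpow_add_le_add_rpow (by positivity) (by positivity) hrpos hr1.le
  have hcast : ((k - y : ℕ) : ℝ) = (k : ℝ) - (y : ℝ) := by
    push_cast [Nat.cast_sub hyk]; ring
  calc (2 * (y : ℝ) + 1) ^ r * ((k : ℝ) - (y : ℝ))
      = ∑ _j ∈ Icc 1 (k - y), (2 * (y : ℝ) + 1) ^ r := by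
        rw [Finset.sum_const, Nat.card_Icc]
        simp only [Nat.add_sub_cancel, nsmul_eq_mul]
        rw [hcast]; ring
    _ ≤ ∑ j ∈ Icc 1 (k - y), (((y + j : ℕ) : ℝ) ^ r + ((y + 1 - j : ℕ) : ℝ) ^ r) :=
        Finset.sum_le_sum key
    _ = (∑ j ∈ Icc 1 (k - y), ((y + j : ℕ) : ℝ) ^ r)
        + ∑ j ∈ Icc 1 (k - y), ((y + 1 - j : ℕ) : ℝ) ^ r := Finset.sum_add_distrib
    _ ≤ (∑ i ∈ Icc (y + 1) k, (i : ℝ) ^ r) + ∑ i ∈ Icc 1 y, (i : ℝ) ^ r := by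
        gcongr ?_ + ?_
        · -- shift: j ↦ y + j
          apply le_of_eq
          refine Finset.sum_nbij' (fun j => y + j) (fun i => i - y) ?_ ?_ ?_ ?_ ?_
          · intro a ha; simp only [mem_Icc] at *; omega
          · intro a ha; simp only [mem_Icc] at *; omega
          · intro a ha; simp only [mem_Icc] at *; omega
          · intro a ha; simp only [mem_Icc] at *; omega
          · intro a ha; rfl
        · -- reflection: drop zero terms and reflect
          have hz : ∀ j ∈ Icc 1 (k - y), j > y → ((y + 1 - j : ℕ) : ℝ) ^ r = 0 := by
            intro j _ hj
            have : y + 1 - j = 0 := by omega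
            rw [this]
            simp [Real.zero_rpow hr0.ne']
          -- sum over Icc 1 (k-y) of f(y+1-j) ≤ sum over Icc 1 (max y (k-y)) = Icc 1 y part
          have step1 : ∑ j ∈ Icc 1 (k - y), ((y + 1 - j : ℕ) : ℝ) ^ r
              ≤ ∑ j ∈ Icc 1 (max y (k - y)), ((y + 1 - j : ℕ) : ℝ) ^ r := by
            apply Finset.sum_le_sum_of_subset_of_nonneg
            · apply Finset.Icc_subset_Icc_right (le_max_right _ _)
            · intro j _ _; positivity
          refine step1.trans ?_
          have hsplit : Icc 1 (max y (k - y)) = Icc 1 y ∪ Icc (y + 1) (max y (k - y)) := by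
            ext i; simp only [Finset.mem_union, mem_Icc]; omega
          rw [hsplit, Finset.sum_union (by
            rw [Finset.disjoint_left]; intro a ha hb
            simp only [mem_Icc] at ha hb; omega)]
          have h2 : ∑ j ∈ Icc (y + 1) (max y (k - y)), ((y + 1 - j : ℕ) : ℝ) ^ r = 0 := by
            apply Finset.sum_eq_zero
            intro j hj
            simp only [mem_Icc] at hj
            have : y + 1 - j = 0 := by omega
            rw [this]; simp [Real.zero_rpow hr0.ne']
          rw [h2, add_zero]
          -- reflect Icc 1 y
          apply le_of_eq
          refine Finset.sum_nbij' (fun j => y + 1 - j) (fun i => y + 1 - i) ?_ ?_ ?_ ?_ ?_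
          · intro a ha; simp only [mem_Icc] at *; omega
          · intro a ha; simp only [mem_Icc] at *; omega
          · intro a ha; simp only [mem_Icc] at *; omega
          · intro a ha; simp only [mem_Icc] at *; omega
          · intro a ha; rfl
    _ = ∑ i ∈ Icc 1 k, (i : ℝ) ^ r := by
        rw [add_comm, ← Finset.sum_union (by
          rw [Finset.disjoint_left]; intro a ha hb
          simp only [mem_Icc] at ha hb; omega)]
        congr 1
        ext i; simp only [Finset.mem_union, mem_Icc]; omega
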